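/- Let u = (u_1, …, u_k) ∈ ℂ^k satisfy |u_m| = 1 for every m, and let A : ℝ^d → ℂ^k be an ℝ-linear map such that Re( conj(u_m) · (A e)_m ) = 0 for every index m and every e ∈ ℝ^d. Define the ℝ-linear map B : ℝ^d → ℝ^k by (B e)_m := Re( conj(i u_m) · (A e)_m ). Then for every 1 ≤ p < ∞ the nuclear norms agree: ν_p^ℂ(A) = ν_p^ℝ(B). (This is the pointwise linear-algebra content of the identity |∇u(x)|_{nucl,p} = |⋆ j u(x)|_{mass,p} for torus-valued Sobolev maps u, applied at a point of differentiability.) -/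

import Mathlib

open Finset
open scoped RealInnerProductSpace

/-- The `p`-nuclear norm of an ℝ-linear map `A : ℝ^d → ℂ^k`:
the infimum of `∑ i ‖ζ i‖_p ‖v i‖` over all finite decompositions
`A e = ∑ i ⟪v i, e⟫ • ζ i`, where `‖ζ‖_p = (∑ j |ζ j|^p)^(1/p)` with `|·|`
the complex modulus. -/
noncomputable def nuclearNormC (d k : ℕ) (p : ℝ)
    (A : EuclideanSpace ℝ (Fin d) →ₗ[ℝ] (Fin k → ℂ)) : ℝ :=
  sInf { s : ℝ | ∃ (l : ℕ) (z : Fin l → Fin k → ℂ)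
      (v : Fin l → EuclideanSpace ℝ (Fin d)),
    (∀ e, A e = ∑ i, ⟪v i, e⟫ • z i) ∧
    s = ∑ i, (∑ j, ‖z i j‖ ^ p) ^ (1 / p) * ‖v i‖ }

/-- The `p`-nuclear norm of a linear map `B : ℝ^d → ℝ^k`. -/
noncomputable def nuclearNormR (d k : ℕ) (p : ℝ)
    (B : EuclideanSpace ℝ (Fin d) →ₗ[ℝ] (Fin k → ℝ)) : ℝ :=
  sInf { s : ℝ | ∃ (l : ℕ) (z : Fin l → Fin k → ℝ)
      (v : Fin l → EuclideanSpace ℝ (Fin d)),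
    (∀ e, B e = ∑ i, ⟪v i, e⟫ • z i) ∧
    s = ∑ i, (∑ j, |z i j| ^ p) ^ (1 / p) * ‖v i‖ }

/-- Let `u ∈ ℂ^k` with `|u_m| = 1` for all `m`, and let
`A : ℝ^d → ℂ^k` be ℝ-linear with `Re(conj u_m · (A e)_m) = 0` for all `m, e`.
Define `B : ℝ^d → ℝ^k` by `(B e)_m = Re(conj(i u_m) · (A e)_m)`. Then
`ν_p^ℂ(A) = ν_p^ℝ(B)` for every `1 ≤ p < ∞`. -/
theorem nuclearNorm_complex_eq_real (d k : ℕ) (hd : 1 ≤ d) (hk : 1 ≤ k)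
    (p : ℝ) (hp : 1 ≤ p)
    (u : Fin k → ℂ) (hu : ∀ m, ‖u m‖ = 1)
    (A : EuclideanSpace ℝ (Fin d) →ₗ[ℝ] (Fin k → ℂ))
    (hA : ∀ (m : Fin k) (e : EuclideanSpace ℝ (Fin d)),
      ((starRingEnd ℂ) (u m) * A e m).re = 0)
    (B : EuclideanSpace ℝ (Fin d) →ₗ[ℝ] (Fin k → ℝ))
    (hB : ∀ (e : EuclideanSpace ℝ (Fin d)) (m : Fin k),
      B e m = ((starRingEnd ℂ) (Complex.I * u m) * A e m).re) :
    nuclearNormC d k p A = nuclearNormR d k p B := by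
  have hp0 : (0:ℝ) ≤ p := le_trans zero_le_one hp
  have h1 : ∀ m, Complex.normSq (u m) = 1 := fun m => by
    have h := hu m
    rw [← Complex.sq_norm, h]; norm_num
  -- Structure: A e m = I * u m * (B e m)
  have key : ∀ e m, A e m = Complex.I * u m * ((B e m : ℝ) : ℂ) := by
    intro e m
    set w := (starRingEnd ℂ) (u m) * A e m with hwdef
    have hre : w.re = 0 := hA m e
    have hw : w = Complex.I * (w.im : ℂ) := by
      apply Complex.ext <;> simp [hre]
    have h2 : B e m = w.im := by
      rw [hB e m, map_mul, Complex.conj_I, mul_assoc, ← hwdef]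
      simp
    have h3 : u m * w = A e m := by
      rw [hwdef, ← mul_assoc, Complex.mul_conj, h1 m]
      simp
    calc A e m = u m * w := h3.symm
      _ = u m * (Complex.I * (w.im : ℂ)) := by rw [← hw]
      _ = Complex.I * u m * ((B e m : ℝ) : ℂ) := by rw [h2]; ring
  -- the two sets
  set SC := { s : ℝ | ∃ (l : ℕ) (z : Fin l → Fin k → ℂ)
      (v : Fin l → EuclideanSpace ℝ (Fin d)),
    (∀ e, A e = ∑ i, ⟪v i, e⟫ • z i) ∧
    s = ∑ i, (∑ j, ‖z i j‖ ^ p) ^ (1 / p) * ‖v i‖ } with hSC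
  set SR := { s : ℝ | ∃ (l : ℕ) (z : Fin l → Fin k → ℝ)
      (v : Fin l → EuclideanSpace ℝ (Fin d)),
    (∀ e, B e = ∑ i, ⟪v i, e⟫ • z i) ∧
    s = ∑ i, (∑ j, |z i j| ^ p) ^ (1 / p) * ‖v i‖ } with hSR
  -- SR ⊆ SC (equal-cost lift of decompositions)
  have hsub : SR ⊆ SC := by
    rintro s ⟨l, z, v, hdec, hval⟩
    refine ⟨l, fun i j => Complex.I * u j * ((z i j : ℝ) : ℂ), v, ?_, ?_⟩
    · intro e
      funext m
      have hBe : B e m = ∑ i, ⟪v i, e⟫ * z i m := by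
        rw [hdec e]
        simp [Finset.sum_apply]
      rw [key e m, hBe]
      push_cast
      simp only [Finset.sum_apply, Pi.smul_apply, Complex.real_smul, Finset.mul_sum]
      refine Finset.sum_congr rfl fun i _ => by push_cast; ring
    · rw [hval]
      refine Finset.sum_congr rfl fun i _ => ?_
      congr 1
      refine congrArg (· ^ (1/p)) (Finset.sum_congr rfl fun j _ => ?_)
      rw [norm_mul, norm_mul, Complex.norm_I, Complex.norm_real, Real.norm_eq_abs, hu j]
      ring_nf
  have habsle : ∀ (ζ : ℂ) (j : Fin k),
      |((starRingEnd ℂ) (Complex.I * u j) * ζ).re| ≤ ‖ζ‖ := by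
    intro ζ j
    refine le_trans (Complex.abs_re_le_norm _) ?_
    rw [map_mul, norm_mul, norm_mul]
    simp [Complex.norm_conj, hu j]
  -- nonemptiness of SR
  have hSRne : SR.Nonempty := by
    refine ⟨_, d, fun i => B (EuclideanSpace.single i 1),
      fun i => EuclideanSpace.single i 1, ?_, rfl⟩
    intro e
    have he : (∑ i, (e i) • EuclideanSpace.single i (1:ℝ)) = e := by
      have := (EuclideanSpace.basisFun (Fin d) ℝ).sum_repr e
      simpa using this
    calc B e = B (∑ i, (e i) • EuclideanSpace.single i (1:ℝ)) := by rw [he]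
      _ = ∑ i, (e i) • B (EuclideanSpace.single i 1) := by
          rw [map_sum]; simp [map_smul]
      _ = ∑ i, ⟪EuclideanSpace.single i (1:ℝ), e⟫ • B (EuclideanSpace.single i 1) := by
          refine Finset.sum_congr rfl fun i _ => ?_
          rw [EuclideanSpace.inner_single_left]
          simp
  have hSCne : SC.Nonempty := hSRne.mono hsub
  -- lower bounds
  have hbddR : BddBelow SR := by
    refine ⟨0, ?_⟩
    rintro s ⟨l, z, v, -, rfl⟩
    refine Finset.sum_nonneg fun i _ => mul_nonneg ?_ (norm_nonneg _)
    exact Real.rpow_nonneg (Finset.sum_nonneg fun j _ =>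
      Real.rpow_nonneg (abs_nonneg _) _) _
  have hbddC : BddBelow SC := by
    refine ⟨0, ?_⟩
    rintro s ⟨l, z, v, -, rfl⟩
    refine Finset.sum_nonneg fun i _ => mul_nonneg ?_ (norm_nonneg _)
    exact Real.rpow_nonneg (Finset.sum_nonneg fun j _ =>
      Real.rpow_nonneg (norm_nonneg _) _) _
  -- for each s ∈ SC there is t ∈ SR with t ≤ s
  have hstep : ∀ s ∈ SC, ∃ t ∈ SR, t ≤ s := by
    rintro s ⟨l, ζ, v, hdec, rfl⟩
    refine ⟨∑ i, (∑ j, |((starRingEnd ℂ) (Complex.I * u j) * ζ i j).re| ^ p) ^ (1/p) * ‖v i‖,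
      ⟨l, fun i j => ((starRingEnd ℂ) (Complex.I * u j) * ζ i j).re, v, ?_, rfl⟩, ?_⟩
    · intro e
      funext m
      have hAe : A e m = ∑ i, ⟪v i, e⟫ • ζ i m := by
        rw [hdec e]; simp [Finset.sum_apply]
      rw [hB e m, hAe]
      simp only [Finset.sum_apply, Pi.smul_apply, smul_eq_mul, Complex.real_smul,
        Finset.mul_sum, Complex.re_sum]
      refine Finset.sum_congr rfl fun i _ => ?_
      rw [mul_left_comm, Complex.re_ofReal_mul]
    · refine Finset.sum_le_sum fun i _ => mul_le_mul_of_nonneg_right ?_ (norm_nonneg _)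
      refine Real.rpow_le_rpow (Finset.sum_nonneg fun j _ =>
        Real.rpow_nonneg (abs_nonneg _) _) ?_ (by positivity)
      exact Finset.sum_le_sum fun j _ =>
        Real.rpow_le_rpow (abs_nonneg _) (habsle (ζ i j) j) hp0
  rw [nuclearNormC, nuclearNormR, ← hSC, ← hSR]
  refine le_antisymm (csInf_le_csInf hbddC hSRne hsub) (le_csInf hSCne ?_)
  intro s hs
  obtain ⟨t, htSR, hts⟩ := hstep s hs
  exact le_trans (csInf_le hbddR htSR) hts
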